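/- Assume α̃ < 1 (hence 0 < r < 1). Then the family π is nonnegative, the series Σ_{k≥0} π_{k0} and Σ_{k≥1} π_{k1} converge, their total sum equals 1, and π satisfies the stationary balance equations of the partially observable chain: (i) π_{00} = p̄(0)π_{00} + p̄(0)μ_v π_{10} + p̄(1)μ_b π_{11}; (ii) π_{10} = p(0)θ̄ π_{00} + θ̄(1−p(0)μ̄_v−p̄(0)μ_v) π_{10} + θ̄ p̄(0) μ_v π_{20}; (iii) for every integer k ≥ 2, π_{k0} = θ̄ p(0) μ̄_v π_{k−1,0} + θ̄(1−p(0)μ̄_v−p̄(0)μ_v) π_{k0} + θ̄ p̄(0) μ_v π_{k+1,0}; (iv) π_{11} = p(0)θ π_{00} + θ(1−p(0)μ̄_v−p̄(0)μ_v) π_{10} + (1−p(1)μ̄_b−p̄(1)μ_b) π_{11} + θ p̄(0) μ_v π_{20} + p̄(1)μ_b π_{21}; (v) for every integer k ≥ 2, π_{k1} = θ p(0) μ̄_v π_{k−1,0} + p(1)μ̄_b π_{k−1,1} + θ(1−p(0)μ̄_v−p̄(0)μ_v) π_{k0} + (1−p(1)μ̄_b−p̄(1)μ_b) π_{k1} +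 θ p̄(0) μ_v π_{k+1,0} + p̄(1)μ_b π_{k+1,1}. -/

import Mathlib

set_option maxHeartbeats 4000000


/-- Geo/Geo/1 with multiple working vacations, partially observable case.
If α̃ < 1, the family π is nonnegative, summable with total mass 1, and satisfies
the stationary balance equations of the partially observable chain. -/
theorem stmt_1
    (p μb μv θ q0 q1 p0 p1 al be r K : ℝ) (π0 π1 : ℕ → ℝ)
    (hp : p ∈ Set.Ioo (0:ℝ) 1) (hμb : μb ∈ Set.Ioo (0:ℝ) 1)
    (hμv : μv ∈ Set.Ioo (0:ℝ) 1) (hθ : θ ∈ Set.Ioo (0:ℝ) 1)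
    (hq0 : q0 ∈ Set.Icc (0:ℝ) 1) (hq1 : q1 ∈ Set.Icc (0:ℝ) 1)
    (hp0 : p0 = p * q0) (hp1 : p1 = p * q1)
    (hp0m : p0 ∈ Set.Ioo (0:ℝ) 1) (hp1m : p1 ∈ Set.Ioo (0:ℝ) 1)
    (hal : al = p1 * (1 - μb) / ((1 - p1) * μb))
    (hbe : be = θ / (1 - θ))
    (hr : r = (be + p0 * (1 - μv) + (1 - p0) * μv -
        Real.sqrt ((be + p0 * (1 - μv) + (1 - p0) * μv) ^ 2 -
          4 * p0 * (1 - p0) * μv * (1 - μv))) / (2 * (1 - p0) * μv))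
    (hK : K = (1 - p1) * μb * (1 - r) * (1 - al) /
        ((1 - p1) * μb * (1 - r) * (1 - al) *
          (θ + (1 - θ) * (1 - p0) * μv * (1 - r) + p0 * (1 - θ)) + p0 * θ))
    (hπ00 : π0 0 = K * (θ + (1 - θ) * (1 - p0) * μv * (1 - r)))
    (hπ0k : ∀ k : ℕ, 1 ≤ k → π0 k = K * p0 * (1 - θ) * (1 - r) * r ^ (k - 1))
    (hπ1k : ∀ k : ℕ, 1 ≤ k →
      π1 k = K * (p0 * θ / ((1 - p1) * μb)) * ∑ j ∈ Finset.range k, r ^ j * al ^ (k - 1 - j))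
    (hal1 : al < 1) :
    (∀ k : ℕ, 0 ≤ π0 k) ∧ (∀ k : ℕ, 1 ≤ k → 0 ≤ π1 k) ∧
    Summable π0 ∧ Summable (fun k : ℕ => π1 (k + 1)) ∧
    (∑' k : ℕ, π0 k) + (∑' k : ℕ, π1 (k + 1)) = 1 ∧
    π0 0 = (1 - p0) * π0 0 + (1 - p0) * μv * π0 1 + (1 - p1) * μb * π1 1 ∧
    π0 1 = p0 * (1 - θ) * π0 0 +
        (1 - θ) * (1 - p0 * (1 - μv) - (1 - p0) * μv) * π0 1 +
        (1 - θ) * (1 - p0) * μv * π0 2 ∧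
    (∀ k : ℕ, 2 ≤ k →
      π0 k = (1 - θ) * p0 * (1 - μv) * π0 (k - 1) +
        (1 - θ) * (1 - p0 * (1 - μv) - (1 - p0) * μv) * π0 k +
        (1 - θ) * (1 - p0) * μv * π0 (k + 1)) ∧
    π1 1 = p0 * θ * π0 0 + θ * (1 - p0 * (1 - μv) - (1 - p0) * μv) * π0 1 +
        (1 - p1 * (1 - μb) - (1 - p1) * μb) * π1 1 +
        θ * (1 - p0) * μv * π0 2 + (1 - p1) * μb * π1 2 ∧
    (∀ k : ℕ, 2 ≤ k →
      π1 k = θ * p0 * (1 - μv) * π0 (k - 1) + p1 * (1 - μb) * π1 (k - 1) +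
        θ * (1 - p0 * (1 - μv) - (1 - p0) * μv) * π0 k +
        (1 - p1 * (1 - μb) - (1 - p1) * μb) * π1 k +
        θ * (1 - p0) * μv * π0 (k + 1) + (1 - p1) * μb * π1 (k + 1)) := by
  obtain ⟨hθ0, hθ1⟩ := hθ
  obtain ⟨hμv0, hμv1⟩ := hμv
  obtain ⟨hμb0, hμb1⟩ := hμb
  obtain ⟨hp00, hp01⟩ := hp0m
  obtain ⟨hp10, hp11⟩ := hp1m
  have ht' : (0:ℝ) < 1 - θ := by linarith
  have hbe0 : 0 < be := by rw [hbe]; positivity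
  have hbe' : be * (1 - θ) = θ := by rw [hbe]; field_simp
  have ha : 0 < p0 * (1 - μv) := by nlinarith
  have hb : 0 < (1 - p0) * μv := by nlinarith
  -- properties of r
  have hD : 0 ≤ (be + p0 * (1 - μv) + (1 - p0) * μv) ^ 2 -
      4 * p0 * (1 - p0) * μv * (1 - μv) := by
    nlinarith [sq_nonneg (p0 * (1 - μv) - (1 - p0) * μv), mul_pos ha hb]
  set s := Real.sqrt ((be + p0 * (1 - μv) + (1 - p0) * μv) ^ 2 -
      4 * p0 * (1 - p0) * μv * (1 - μv)) with hs_def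
  have hs0 : 0 ≤ s := Real.sqrt_nonneg _
  have hs2 : s ^ 2 = (be + p0 * (1 - μv) + (1 - p0) * μv) ^ 2 -
      4 * p0 * (1 - p0) * μv * (1 - μv) := Real.sq_sqrt hD
  have h2b : (0:ℝ) < 2 * (1 - p0) * μv := by nlinarith
  have h2 : r * (2 * (1 - p0) * μv) = (be + p0 * (1 - μv) + (1 - p0) * μv) - s := by
    rw [hr, div_mul_cancel₀ _ (ne_of_gt h2b)]
  have hSpos : 0 < be + p0 * (1 - μv) + (1 - p0) * μv := by linarith
  have hsltS : s < be + p0 * (1 - μv) + (1 - p0) * μv := by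
    nlinarith [mul_pos ha hb]
  have hr0 : 0 < r := by
    rw [hr]; apply div_pos; linarith; exact h2b
  have hquad : (1-p0)*μv*r^2 - (be + p0*(1-μv) + (1-p0)*μv)*r + p0*(1-μv) = 0 := by
    have hs' : s = (be + p0 * (1 - μv) + (1 - p0) * μv) - 2 * ((1-p0)*μv) * r := by linarith
    have h4 : (4 * ((1-p0)*μv)) * ((1-p0)*μv*r^2 - (be + p0*(1-μv) + (1-p0)*μv)*r + p0*(1-μv)) = 0 := by
      linear_combination hs2 + (-(s + (be + p0 * (1 - μv) + (1 - p0) * μv) - 2*((1-p0)*μv)*r)) * hs'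
    rcases mul_eq_zero.mp h4 with h | h
    · nlinarith
    · exact h
  have hr1 : r < 1 := by
    rw [hr, div_lt_one h2b]
    by_contra hc
    push_neg at hc
    have h1 : s ≤ (be + p0 * (1 - μv) + (1 - p0) * μv) - 2 * (1 - p0) * μv := by linarith
    have h2' : s^2 ≤ ((be + p0 * (1 - μv) + (1 - p0) * μv) - 2 * (1 - p0) * μv)^2 := by nlinarith
    rw [hs2] at h2'
    nlinarith [mul_pos hb hbe0]
  clear hs2 hs0 hs_def h2 hsltS hD h2b hr
  have hQt : (1-θ)*(p0*(1-μv)) + (1-θ)*(1 - p0*(1-μv) - (1-p0)*μv)*r + (1-θ)*((1-p0)*μv)*r^2 = r := by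
    linear_combination (1-θ)*hquad + r*hbe'
  -- al facts
  have hD1 : (0:ℝ) < (1 - p1) * μb := by nlinarith
  have hD1ne : ((1:ℝ) - p1) * μb ≠ 0 := ne_of_gt hD1
  have hal' : al * ((1 - p1) * μb) = p1 * (1 - μb) := by
    rw [hal]; field_simp
  have hal0 : 0 < al := by
    rw [hal]; apply div_pos; nlinarith; exact hD1
  -- K facts
  have h1r : (0:ℝ) < 1 - r := by linarith
  have h1al : (0:ℝ) < 1 - al := by linarith
  have hA : 0 < (1 - p1) * μb * (1 - r) * (1 - al) := by
    apply mul_pos (mul_pos hD1 h1r) h1al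
  have hB : 0 < θ + (1 - θ) * (1 - p0) * μv * (1 - r) + p0 * (1 - θ) := by
    have h1 : 0 < (1 - θ) * (1 - p0) * μv * (1 - r) := by
      apply mul_pos (mul_pos (mul_pos ht' (by linarith)) hμv0) h1r
    nlinarith [mul_pos hp00 ht']
  have hden : 0 < (1 - p1) * μb * (1 - r) * (1 - al) *
      (θ + (1 - θ) * (1 - p0) * μv * (1 - r) + p0 * (1 - θ)) + p0 * θ := by
    have k1 := mul_pos hA hB
    have k2 := mul_pos hp00 hθ0
    linarith
  have hK0 : 0 < K := by rw [hK]; exact div_pos hA hden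
  have hKeq : K * ((1 - p1) * μb * (1 - r) * (1 - al) *
      (θ + (1 - θ) * (1 - p0) * μv * (1 - r) + p0 * (1 - θ)) + p0 * θ) =
      (1 - p1) * μb * (1 - r) * (1 - al) := by
    rw [hK, div_mul_cancel₀ _ (ne_of_gt hden)]
  -- explicit values
  have hc0 : ∀ n : ℕ, π0 (n + 1) = K * p0 * (1 - θ) * (1 - r) * r ^ n := by
    intro n; rw [hπ0k (n+1) (Nat.le_add_left 1 n)]; norm_num
  have h01 : π0 1 = K * p0 * (1 - θ) * (1 - r) := by simpa using hc0 0
  have h02 : π0 2 = K * p0 * (1 - θ) * (1 - r) * r := by simpa using hc0 1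
  have h1clear : ∀ k : ℕ, 1 ≤ k → ((1 - p1) * μb) * π1 k =
      K * p0 * θ * ∑ j ∈ Finset.range k, r ^ j * al ^ (k - 1 - j) := by
    intro k hk
    have e : ((1 - p1) * μb) * (K * (p0 * θ / ((1 - p1) * μb))) = K * p0 * θ := by
      field_simp
    rw [hπ1k k hk, ← mul_assoc, e]
  have h11 : ((1 - p1) * μb) * π1 1 = K * p0 * θ := by
    have h := h1clear 1 le_rfl
    simpa using h
  have h12 : ((1 - p1) * μb) * π1 2 = K * p0 * θ * (al + r) := by
    rw [h1clear 2 (by norm_num)]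
    rw [Finset.sum_range_succ, Finset.sum_range_one]
    norm_num
  have hSrec : ∀ M : ℕ, ∑ j ∈ Finset.range (M+1), r ^ j * al ^ (M - j) =
      al * (∑ j ∈ Finset.range M, r ^ j * al ^ (M - 1 - j)) + r ^ M := by
    intro M
    rw [Finset.sum_range_succ]
    have hcong : ∀ j ∈ Finset.range M, r ^ j * al ^ (M - j) = al * (r ^ j * al ^ (M - 1 - j)) := by
      intro j hj
      have hj' : j < M := Finset.mem_range.mp hj
      have h : M - j = (M - 1 - j) + 1 := by omega
      rw [h, pow_succ]; ring
    rw [Finset.sum_congr rfl hcong, ← Finset.mul_sum, Nat.sub_self, pow_zero, mul_one]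
  -- summability
  have hsg : Summable (fun n : ℕ => r ^ n) := summable_geometric_of_lt_one hr0.le hr1
  have hsum0' : Summable (fun n : ℕ => π0 (n + 1)) :=
    (hsg.mul_left (K * p0 * (1 - θ) * (1 - r))).congr fun n => (hc0 n).symm
  have hsum0 : Summable π0 := (summable_nat_add_iff 1).mp hsum0'
  have hnr : Summable (fun n : ℕ => ‖r ^ n‖) := by
    have h : (fun n : ℕ => ‖r ^ n‖) = fun n : ℕ => r ^ n := by
      funext n; rw [Real.norm_eq_abs, abs_pow, abs_of_nonneg hr0.le]
    rw [h]; exact hsg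
  have hnal : Summable (fun n : ℕ => ‖al ^ n‖) := by
    have h : (fun n : ℕ => ‖al ^ n‖) = fun n : ℕ => al ^ n := by
      funext n; rw [Real.norm_eq_abs, abs_pow, abs_of_nonneg hal0.le]
    rw [h]; exact summable_geometric_of_lt_one hal0.le hal1
  have hcau := hasSum_sum_range_mul_of_summable_norm hnr hnal
  rw [tsum_geometric_of_lt_one hr0.le hr1, tsum_geometric_of_lt_one hal0.le hal1] at hcau
  have heq1 : ∀ n : ℕ, π1 (n + 1) =
      (K * (p0 * θ / ((1 - p1) * μb))) * ∑ j ∈ Finset.range (n + 1), r ^ j * al ^ (n - j) := by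
    intro n
    rw [hπ1k (n+1) (Nat.le_add_left 1 n)]
    norm_num
  have hsum1 : Summable (fun n : ℕ => π1 (n + 1)) :=
    ((hcau.mul_left (K * (p0 * θ / ((1 - p1) * μb)))).summable).congr fun n => (heq1 n).symm
  have htsum1 : ∑' n : ℕ, π1 (n + 1) =
      (K * (p0 * θ / ((1 - p1) * μb))) * ((1 - r)⁻¹ * (1 - al)⁻¹) := by
    rw [tsum_congr heq1, tsum_mul_left, hcau.tsum_eq]
  have htsum0 : ∑' k : ℕ, π0 k =
      K * (θ + (1 - θ) * (1 - p0) * μv * (1 - r)) + K * p0 * (1 - θ) * (1 - r) * (1 - r)⁻¹ := by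
    rw [Summable.tsum_eq_zero_add hsum0, hπ00]
    congr 1
    rw [tsum_congr hc0, tsum_mul_left, tsum_geometric_of_lt_one hr0.le hr1]
  refine ⟨?_, ?_, hsum0, hsum1, ?_, ?_, ?_, ?_, ?_, ?_⟩
  · -- nonneg π0
    intro k
    cases k with
    | zero =>
        rw [hπ00]
        have h1 : 0 < (1 - θ) * (1 - p0) * μv * (1 - r) := by
          apply mul_pos (mul_pos (mul_pos ht' (by linarith)) hμv0) h1r
        nlinarith
    | succ n =>
        rw [hc0 n]
        have := mul_pos (mul_pos (mul_pos (mul_pos hK0 hp00) ht') h1r) (pow_pos hr0 n)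
        linarith
  · -- nonneg π1
    intro k hk
    rw [hπ1k k hk]
    apply mul_nonneg
    · apply mul_nonneg hK0.le
      apply div_nonneg (by positivity) hD1.le
    · exact Finset.sum_nonneg fun j _ => mul_nonneg (pow_nonneg hr0.le _) (pow_nonneg hal0.le _)
  · -- total mass
    rw [htsum0, htsum1]
    have eR : (1-r)*(1-r)⁻¹ = 1 := mul_inv_cancel₀ (ne_of_gt h1r)
    have eA : (1-al)*(1-al)⁻¹ = 1 := mul_inv_cancel₀ (ne_of_gt h1al)
    have eD : ((1-p1)*μb)*((1-p1)*μb)⁻¹ = 1 := mul_inv_cancel₀ hD1ne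
    linear_combination ((1-r)⁻¹*(1-al)⁻¹*((1-p1)*μb)⁻¹) * hKeq
      + (K*p0*(1-θ)) * eR
      + (1 - K*(θ + (1-θ)*(1-p0)*μv*(1-r) + p0*(1-θ))) *
          ((1-r)*(1-r)⁻¹*(1-al)*(1-al)⁻¹ * eD + (1-al)*(1-al)⁻¹ * eR + eA)
  · -- eq (i)
    apply mul_left_cancel₀ hD1ne
    linear_combination (p0*((1-p1)*μb))*hπ00 - ((1-p0)*μv*((1-p1)*μb))*h01 - ((1-p1)*μb)*h11
  · -- eq (ii)
    linear_combination (1 - (1-θ)*(1 - p0*(1-μv) - (1-p0)*μv))*h01 - (p0*(1-θ))*hπ00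
      - ((1-θ)*(1-p0)*μv)*h02 + (K*p0*(1-θ))*hQt
  · -- eq (iii)
    intro k hk
    obtain ⟨m, rfl⟩ : ∃ m, k = m + 2 := ⟨k - 2, by omega⟩
    have e1 : m + 2 - 1 = m + 1 := rfl
    rw [e1]
    linear_combination (1 - (1-θ)*(1 - p0*(1-μv) - (1-p0)*μv))*(hc0 (m+1))
      - ((1-θ)*p0*(1-μv))*(hc0 m) - ((1-θ)*(1-p0)*μv)*(hc0 (m+2))
      - (K*p0*(1-θ)*(1-r)*r^m)*hQt
  · -- eq (iv)
    apply mul_left_cancel₀ hD1ne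
    linear_combination (p1*(1-μb)+(1-p1)*μb)*h11 - ((1-p1)*μb*p0*θ)*hπ00
      - ((1-p1)*μb*θ*(1 - p0*(1-μv) - (1-p0)*μv))*h01
      - ((1-p1)*μb*θ*((1-p0)*μv))*h02 - ((1-p1)*μb)*h12
      - (K*p0*θ)*hal' + (K*p0*θ*((1-p1)*μb))*hQt
  · -- eq (v)
    intro k hk
    obtain ⟨m, rfl⟩ : ∃ m, k = m + 2 := ⟨k - 2, by omega⟩
    have e1 : m + 2 - 1 = m + 1 := rfl
    rw [e1]
    have h1a : ((1 - p1) * μb) * π1 (m + 1) =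
        K * p0 * θ * ∑ j ∈ Finset.range (m + 1), r ^ j * al ^ (m - j) := by
      rw [h1clear (m+1) (Nat.le_add_left 1 m)]
      simp only [Nat.add_sub_cancel]
    have h1b : ((1 - p1) * μb) * π1 (m + 2) =
        K * p0 * θ * (al * (∑ j ∈ Finset.range (m + 1), r ^ j * al ^ (m - j)) + r ^ (m+1)) := by
      rw [h1clear (m+2) (by omega)]
      show K * p0 * θ * ∑ j ∈ Finset.range ((m+1)+1), r ^ j * al ^ ((m+1) - j) =
        K * p0 * θ * (al * (∑ j ∈ Finset.range (m + 1), r ^ j * al ^ (m - j)) + r ^ (m+1))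
      rw [hSrec (m+1)]
      simp only [Nat.add_sub_cancel]
    have h1c : ((1 - p1) * μb) * π1 (m + 3) =
        K * p0 * θ * (al * (al * (∑ j ∈ Finset.range (m + 1), r ^ j * al ^ (m - j)) + r ^ (m+1))
          + r ^ (m+2)) := by
      rw [h1clear (m+3) (by omega)]
      show K * p0 * θ * ∑ j ∈ Finset.range ((m+2)+1), r ^ j * al ^ ((m+2) - j) =
        K * p0 * θ * (al * (al * (∑ j ∈ Finset.range (m + 1), r ^ j * al ^ (m - j)) + r ^ (m+1))
          + r ^ (m+2))
      rw [hSrec (m+2)]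
      show K * p0 * θ * (al * ∑ j ∈ Finset.range ((m+1)+1), r ^ j * al ^ ((m+1) - j) + r ^ (m+2)) =
        K * p0 * θ * (al * (al * (∑ j ∈ Finset.range (m + 1), r ^ j * al ^ (m - j)) + r ^ (m+1))
          + r ^ (m+2))
      rw [hSrec (m+1)]
      simp only [Nat.add_sub_cancel]
    apply mul_left_cancel₀ hD1ne
    linear_combination (p1*(1-μb)+(1-p1)*μb)*h1b
      - ((1-p1)*μb*θ*(p0*(1-μv)))*(hc0 m)
      - (p1*(1-μb))*h1a
      - ((1-p1)*μb*θ*(1 - p0*(1-μv) - (1-p0)*μv))*(hc0 (m+1))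
      - ((1-p1)*μb*θ*((1-p0)*μv))*(hc0 (m+2))
      - ((1-p1)*μb)*h1c
      - (K*p0*θ*((al-1)*(∑ j ∈ Finset.range (m + 1), r ^ j * al ^ (m - j)) + r^(m+1)))*hal'
      - (K*p0*θ*r^m*((1-p1)*μb)*(1-r))*hQt
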